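/- Fix a rational quadratic polynomial q with Disc(q) ≠ 0 and set m = −Det(q)/Disc(q). Let ℚ(q) = { q(x,y) : x, y ∈ ℚ, q(x,y) ≠ −m }. For α, β, γ ∈ ℚ(q), the value ((α+m)(γ+m)/(β+m)) − m again lies in ℚ(q), i.e., it equals q(x,y) for some rational x, y with q(x,y) ≠ −m. -/

import Mathlib

set_option maxHeartbeats 1000000

/-- The set `ℚ(q)` of values `q(x,y) ≠ -m` (with `m = -Det(q)/Disc(q)`,
`Disc(q) ≠ 0`) is closed under `α·β*·γ = (α+m)(γ+m)/(β+m) - m`. -/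
theorem value_set_closed_triple_product (a b c d e f m : ℚ)
    (hDisc : a * c - b ^ 2 / 4 ≠ 0)
    (hm : m = -(Matrix.det !![a, b / 2, d / 2; b / 2, c, e / 2; d / 2, e / 2, f])
              / (a * c - b ^ 2 / 4))
    (q : ℚ → ℚ → ℚ)
    (hq : ∀ x y, q x y = a * x ^ 2 + b * x * y + c * y ^ 2 + d * x + e * y + f)
    (α β γ : ℚ)
    (hα : ∃ x y, q x y = α ∧ q x y ≠ -m)
    (hβ : ∃ x y, q x y = β ∧ q x y ≠ -m)
    (hγ : ∃ x y, q x y = γ ∧ q x y ≠ -m) :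
    ∃ x y, q x y = (α + m) * (γ + m) / (β + m) - m ∧ q x y ≠ -m := by
  obtain ⟨x₁, y₁, hq₁, hn₁⟩ := hα
  obtain ⟨x₂, y₂, hq₂, hn₂⟩ := hβ
  obtain ⟨x₃, y₃, hq₃, hn₃⟩ := hγ
  have hα0 : α + m ≠ 0 := by intro h; apply hn₁; rw [hq₁]; linarith
  have hβ0 : β + m ≠ 0 := by intro h; apply hn₂; rw [hq₂]; linarith
  have hγ0 : γ + m ≠ 0 := by intro h; apply hn₃; rw [hq₃]; linarith
  have hT0 : (α + m) * (γ + m) / (β + m) ≠ 0 :=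
    div_ne_zero (mul_ne_zero hα0 hγ0) hβ0
  obtain ⟨T, hT⟩ : ∃ T : ℚ, T = (α + m) * (γ + m) / (β + m) := ⟨_, rfl⟩
  rw [← hT] at hT0 ⊢
  by_cases ha : a = 0
  · -- b ≠ 0, and q represents every rational
    have hb : b ≠ 0 := by intro hb0; apply hDisc; rw [ha, hb0]; ring
    refine ⟨T - m - (c * ((1 - d)/b)^2 + e * ((1 - d)/b) + f), (1 - d)/b, ?_, ?_⟩
    · rw [hq, ha]; field_simp; ring
    · have hv : q (T - m - (c * ((1 - d)/b)^2 + e * ((1 - d)/b) + f)) ((1 - d)/b)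
          = T - m := by rw [hq, ha]; field_simp; ring
      rw [hv]; intro hc; exact hT0 (by linarith)
  · -- a ≠ 0 : use the norm-form structure
    have hDet : Matrix.det !![a, b / 2, d / 2; b / 2, c, e / 2; d / 2, e / 2, f]
        = a * c * f + b / 2 * (e / 2) * (d / 2) + d / 2 * (b / 2) * (e / 2)
          - d / 2 * c * (d / 2) - b / 2 * (b / 2) * f - a * (e / 2) * (e / 2) := by
      rw [Matrix.det_fin_three]
      simp [Matrix.cons_val_zero, Matrix.cons_val_one]
      ring
    have hmD : m * (a * c - b ^ 2 / 4)
        = -(a * c * f + b / 2 * (e / 2) * (d / 2) + d / 2 * (b / 2) * (e / 2)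
          - d / 2 * c * (d / 2) - b / 2 * (b / 2) * f - a * (e / 2) * (e / 2)) := by
      rw [hm, hDet, div_mul_cancel₀ _ hDisc]
    obtain ⟨D, hD⟩ : ∃ D : ℚ, D = a * c - b ^ 2 / 4 := ⟨_, rfl⟩
    rw [← hD] at hDisc hmD
    have key : ∀ x y : ℚ, 16 * D ^ 2 * (a * (q x y + m))
        = (4 * D * a * x + 2 * D * b * y + 2 * D * d) ^ 2
          + D * (4 * D * y - (b * d - 2 * a * e)) ^ 2 := by
      intro x y
      have hmD' := hmD
      rw [hD] at hmD'
      rw [hq, hD]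
      linear_combination (16 * (a * c - b ^ 2 / 4) * a) * hmD'
    obtain ⟨u₁, hu₁⟩ : ∃ u : ℚ, u = 4 * D * a * x₁ + 2 * D * b * y₁ + 2 * D * d := ⟨_, rfl⟩
    obtain ⟨v₁, hv₁⟩ : ∃ v : ℚ, v = 4 * D * y₁ - (b * d - 2 * a * e) := ⟨_, rfl⟩
    obtain ⟨u₂, hu₂⟩ : ∃ u : ℚ, u = 4 * D * a * x₂ + 2 * D * b * y₂ + 2 * D * d := ⟨_, rfl⟩
    obtain ⟨v₂, hv₂⟩ : ∃ v : ℚ, v = 4 * D * y₂ - (b * d - 2 * a * e) := ⟨_, rfl⟩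
    obtain ⟨u₃, hu₃⟩ : ∃ u : ℚ, u = 4 * D * a * x₃ + 2 * D * b * y₃ + 2 * D * d := ⟨_, rfl⟩
    obtain ⟨v₃, hv₃⟩ : ∃ v : ℚ, v = 4 * D * y₃ - (b * d - 2 * a * e) := ⟨_, rfl⟩
    have hN₁ : u₁ ^ 2 + D * v₁ ^ 2 = 16 * D ^ 2 * (a * (α + m)) := by
      rw [hu₁, hv₁, ← hq₁, ← key x₁ y₁]
    have hN₂ : u₂ ^ 2 + D * v₂ ^ 2 = 16 * D ^ 2 * (a * (β + m)) := by
      rw [hu₂, hv₂, ← hq₂, ← key x₂ y₂]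
    have hN₃ : u₃ ^ 2 + D * v₃ ^ 2 = 16 * D ^ 2 * (a * (γ + m)) := by
      rw [hu₃, hv₃, ← hq₃, ← key x₃ y₃]
    clear hu₁ hv₁ hu₂ hv₂ hu₃ hv₃
    have h16D : (16 : ℚ) * D ^ 2 ≠ 0 :=
      mul_ne_zero (by norm_num) (pow_ne_zero 2 hDisc)
    have hN₂0 : u₂ ^ 2 + D * v₂ ^ 2 ≠ 0 := by
      rw [hN₂]; exact mul_ne_zero h16D (mul_ne_zero ha hβ0)
    obtain ⟨N₂, hN2def⟩ : ∃ N : ℚ, N = u₂ ^ 2 + D * v₂ ^ 2 := ⟨_, rfl⟩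
    rw [← hN2def] at hN₂0 hN₂
    obtain ⟨U, hU⟩ : ∃ U : ℚ,
        U = ((u₁ * u₂ + D * v₁ * v₂) * u₃ - D * (u₂ * v₁ - u₁ * v₂) * v₃) / N₂ := ⟨_, rfl⟩
    obtain ⟨V, hV⟩ : ∃ V : ℚ,
        V = ((u₁ * u₂ + D * v₁ * v₂) * v₃ + (u₂ * v₁ - u₁ * v₂) * u₃) / N₂ := ⟨_, rfl⟩
    have hnorm : U ^ 2 + D * V ^ 2
        = (u₁ ^ 2 + D * v₁ ^ 2) * (u₃ ^ 2 + D * v₃ ^ 2) / N₂ := by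
      rw [hU, hV, div_pow, div_pow, ← mul_div_assoc,
        div_add_div _ _ (pow_ne_zero 2 hN₂0) (pow_ne_zero 2 hN₂0),
        div_eq_div_iff (mul_ne_zero (pow_ne_zero 2 hN₂0) (pow_ne_zero 2 hN₂0)) hN₂0,
        hN2def]
      ring
    clear hU hV
    have haT : U ^ 2 + D * V ^ 2 = 16 * D ^ 2 * (a * T) := by
      rw [hnorm, hN₁, hN₃, hN₂, hT]
      field_simp
    clear hnorm hN₁ hN₂ hN₃ hN2def
    have h4D : (4 : ℚ) * D ≠ 0 := mul_ne_zero (by norm_num) hDisc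
    refine ⟨(U - 2 * D * b * ((V + (b * d - 2 * a * e)) / (4 * D)) - 2 * D * d) / (4 * D * a),
        (V + (b * d - 2 * a * e)) / (4 * D), ?_, ?_⟩
    all_goals {
      have hk := key ((U - 2 * D * b * ((V + (b * d - 2 * a * e)) / (4 * D)) - 2 * D * d)
          / (4 * D * a)) ((V + (b * d - 2 * a * e)) / (4 * D))
      have h2 : 4 * D * a * ((U - 2 * D * b * ((V + (b * d - 2 * a * e)) / (4 * D)) - 2 * D * d)
          / (4 * D * a)) + 2 * D * b * ((V + (b * d - 2 * a * e)) / (4 * D)) + 2 * D * d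
          = U := by
        rw [mul_div_cancel₀ _ (mul_ne_zero h4D ha)]; ring
      have h3 : 4 * D * ((V + (b * d - 2 * a * e)) / (4 * D)) - (b * d - 2 * a * e) = V := by
        rw [mul_div_cancel₀ _ h4D]; ring
      rw [h2, h3, haT] at hk
      have hk2 := mul_left_cancel₀ ha (mul_left_cancel₀ h16D hk)
      first
        | linarith
        | · intro hc
            rw [hc] at hk2
            exact hT0 (by linarith)
    }
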